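/- Let ρ_A and ρ_B be density matrices on ℂ^n with ρ_A ρ_B = ρ_B ρ_A. Then the compatibility equals the fidelity: C(ρ_A, ρ_B) = F(ρ_A, ρ_B). -/

import Mathlib

open Matrix BigOperators
open scoped ComplexOrder

/-- A density matrix: positive semidefinite with trace 1. -/
def IsDensityMatrix {d : Type*} [Fintype d] [DecidableEq d]
    (ρ : Matrix d d ℂ) : Prop :=
  ρ.PosSemidef ∧ ρ.trace = 1

/-- The compatibility `C(ρA, ρB)`: the supremum, over all finite families of density
matrices `σ` and weight vectors `p`, `q` (nonnegative, summing to 1) with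
`∑ i, p i • σ i = ρA` and `∑ i, q i • σ i = ρB`, of the Bhattacharyya overlap
`∑ i, √(p i * q i)`. -/
noncomputable def compat {d : Type*} [Fintype d] [DecidableEq d]
    (ρA ρB : Matrix d d ℂ) : ℝ :=
  sSup { c : ℝ | ∃ (m : ℕ) (σ : Fin m → Matrix d d ℂ) (p q : Fin m → ℝ),
    (∀ i, IsDensityMatrix (σ i)) ∧ (∀ i, 0 ≤ p i) ∧ (∀ i, 0 ≤ q i) ∧
    ∑ i, p i = 1 ∧ ∑ i, q i = 1 ∧
    ∑ i, p i • σ i = ρA ∧ ∑ i, q i • σ i = ρB ∧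
    c = ∑ i, Real.sqrt (p i * q i) }

open scoped Classical in
/-- The positive semidefinite square root of a positive semidefinite matrix
(junk value `0` on non-PSD matrices). -/
noncomputable def psdSqrt {d : Type*} [Fintype d] [DecidableEq d]
    (A : Matrix d d ℂ) : Matrix d d ℂ :=
  if h : A.PosSemidef then
    h.1.eigenvectorUnitary.1 * diagonal ((↑) ∘ (Real.sqrt ·) ∘ h.1.eigenvalues) *
      (star h.1.eigenvectorUnitary : Matrix d d ℂ) else 0

/-- The fidelity `F(ρA, ρB) = Tr √(√ρA ρB √ρA)`. -/
noncomputable def fidelity {d : Type*} [Fintype d] [DecidableEq d]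
    (ρA ρB : Matrix d d ℂ) : ℝ :=
  (psdSqrt (psdSqrt ρA * ρB * psdSqrt ρA)).trace.re

/-- The pure-state density matrix `|ψ⟩⟨ψ|` associated to a vector `ψ`. -/
def pureState {d : Type*} [Fintype d] [DecidableEq d] (ψ : d → ℂ) : Matrix d d ℂ :=
  Matrix.vecMulVec ψ (star ψ)

/-! ### Auxiliary lemmas -/

open Module.End in
/-- A commuting pair of symmetric operators admits a common orthonormal eigenbasis. -/
theorem LinearMap.IsSymmetric.common_eigenbasis {𝕜 E : Type*} [RCLike 𝕜]
    [NormedAddCommGroup E] [InnerProductSpace 𝕜 E] [FiniteDimensional 𝕜 E] {n : ℕ}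
    (hn : Module.finrank 𝕜 E = n) {A B : E →ₗ[𝕜] E}
    (hA : A.IsSymmetric) (hB : B.IsSymmetric) (hAB : Commute A B) :
    ∃ (v : OrthonormalBasis (Fin n) 𝕜 E) (μ : Fin n → 𝕜 × 𝕜),
      ∀ k, A (v k) = (μ k).2 • v k ∧ B (v k) = (μ k).1 • v k := by
  classical
  set V : 𝕜 × 𝕜 → Submodule 𝕜 E := fun i =>
    (eigenspace A i.2 ⊓ eigenspace B i.1 : Submodule 𝕜 E) with hVdef
  have hInt : DirectSum.IsInternal V := hA.directSum_isInternal_of_commute hB hAB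
  have hOrth : OrthogonalFamily 𝕜 (fun i : 𝕜 × 𝕜 => (V i : Submodule 𝕜 E))
      (fun i => (V i).subtypeₗᵢ) :=
    LinearMap.IsSymmetric.orthogonalFamily_eigenspace_inf_eigenspace hA hB
  haveI : Fintype {i : 𝕜 × 𝕜 // V i ≠ ⊥} :=
    hInt.submodule_iSupIndep.fintypeNeBotOfFiniteDimensional
  have hInt' : DirectSum.IsInternal (fun i : {i : 𝕜 × 𝕜 // V i ≠ ⊥} => V i) :=
    DirectSum.isInternal_ne_bot_iff.mpr hInt
  have hOrth' : OrthogonalFamily 𝕜 (fun i : {i : 𝕜 × 𝕜 // V i ≠ ⊥} => (V i.val : Submodule 𝕜 E))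
      (fun i => (V i.val).subtypeₗᵢ) := by
    intro i j hij
    exact hOrth (fun h => hij (Subtype.ext h))
  refine ⟨hInt'.subordinateOrthonormalBasis hn hOrth',
    fun k => (hInt'.subordinateOrthonormalBasisIndex hn k hOrth').val, fun k => ?_⟩
  have hmem := hInt'.subordinateOrthonormalBasis_subordinate hn k hOrth'
  exact ⟨mem_eigenspace_iff.mp hmem.1, mem_eigenspace_iff.mp hmem.2⟩

/-- Commuting PSD matrices are simultaneously unitarily diagonalizable, with nonnegative
real diagonal entries. -/
theorem Matrix.PosSemidef.exists_unitary_diag {n : ℕ} {ρA ρB : Matrix (Fin n) (Fin n) ℂ}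
    (hA : ρA.PosSemidef) (hB : ρB.PosSemidef) (hcomm : ρA * ρB = ρB * ρA) :
    ∃ (U : Matrix (Fin n) (Fin n) ℂ) (a b : Fin n → ℝ),
      Uᴴ * U = 1 ∧ (∀ k, 0 ≤ a k) ∧ (∀ k, 0 ≤ b k) ∧
      ρA = U * Matrix.diagonal (fun k => (a k : ℂ)) * Uᴴ ∧
      ρB = U * Matrix.diagonal (fun k => (b k : ℂ)) * Uᴴ := by
  have hmul : ∀ (M N : Matrix (Fin n) (Fin n) ℂ),
      Matrix.toEuclideanLin (M * N) = Matrix.toEuclideanLin M ∘ₗ Matrix.toEuclideanLin N := by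
    intro M N; ext x; simp [Matrix.toEuclideanLin_apply, Matrix.mulVec_mulVec]
  have hAsym : (Matrix.toEuclideanLin ρA).IsSymmetric :=
    Matrix.isHermitian_iff_isSymmetric.mp hA.1
  have hBsym : (Matrix.toEuclideanLin ρB).IsSymmetric :=
    Matrix.isHermitian_iff_isSymmetric.mp hB.1
  have hcomm' : Commute (Matrix.toEuclideanLin ρA) (Matrix.toEuclideanLin ρB) := by
    unfold Commute SemiconjBy
    have h1 : Matrix.toEuclideanLin ρA * Matrix.toEuclideanLin ρB
        = Matrix.toEuclideanLin (ρA * ρB) := (hmul ρA ρB).symm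
    have h2 : Matrix.toEuclideanLin ρB * Matrix.toEuclideanLin ρA
        = Matrix.toEuclideanLin (ρB * ρA) := (hmul ρB ρA).symm
    rw [h1, h2, hcomm]
  have hn : Module.finrank ℂ (EuclideanSpace ℂ (Fin n)) = n := finrank_euclideanSpace_fin
  obtain ⟨v, μ, hv⟩ := LinearMap.IsSymmetric.common_eigenbasis hn hAsym hBsym hcomm'
  have hvA : ∀ k x, ρA.mulVec (v k) x = (μ k).2 * v k x := by
    intro k x
    have := congrFun (congrArg (WithLp.equiv 2 (Fin n → ℂ)) (hv k).1) x
    simpa [Matrix.toEuclideanLin_apply] using this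
  have hvB : ∀ k x, ρB.mulVec (v k) x = (μ k).1 * v k x := by
    intro k x
    have := congrFun (congrArg (WithLp.equiv 2 (Fin n → ℂ)) (hv k).2) x
    simpa [Matrix.toEuclideanLin_apply] using this
  set U : Matrix (Fin n) (Fin n) ℂ := Matrix.of (fun x k => v k x) with hUdef
  have hUU : Uᴴ * U = 1 := by
    ext k l
    have horth := v.orthonormal
    rw [orthonormal_iff_ite] at horth
    have h := horth k l
    rw [PiLp.inner_apply] at h
    simp only [Matrix.mul_apply, Matrix.conjTranspose_apply, Matrix.one_apply, hUdef,
      Matrix.of_apply, Matrix.star_apply]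
    simpa [mul_comm] using h
  have hU' : U * Uᴴ = 1 := mul_eq_one_comm.mp hUU
  have hinner : ∀ k, (star ((v k : Fin n → ℂ))) ⬝ᵥ ((v k : Fin n → ℂ)) = 1 := by
    intro k
    have horth := v.orthonormal
    rw [orthonormal_iff_ite] at horth
    have h := horth k k
    rw [PiLp.inner_apply] at h
    simpa [dotProduct, Pi.star_apply, mul_comm, Complex.mul_conj'] using h
  have hdot : ∀ (M : Matrix (Fin n) (Fin n) ℂ) (c : ℂ) (k : Fin n),
      (∀ x, M.mulVec (v k) x = c * v k x) →
      (star ((v k : Fin n → ℂ))) ⬝ᵥ (M.mulVec (v k)) = c := by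
    intro M c k hMk
    have h1 : M.mulVec (v k) = fun x => c * v k x := funext hMk
    rw [h1]
    have : (star ((v k : Fin n → ℂ))) ⬝ᵥ (fun x => c * v k x)
        = c * ((star ((v k : Fin n → ℂ))) ⬝ᵥ ((v k : Fin n → ℂ))) := by
      simp [dotProduct, Finset.mul_sum]; congr 1; funext x; ring
    rw [this, hinner k, mul_one]
  have hαA : ∀ k, 0 ≤ (μ k).2 := by
    intro k
    have h0 := hA.dotProduct_mulVec_nonneg (v k).ofLp
    rwa [hdot ρA ((μ k).2) k (hvA k)] at h0
  have hαB : ∀ k, 0 ≤ (μ k).1 := by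
    intro k
    have h0 := hB.dotProduct_mulVec_nonneg (v k).ofLp
    rwa [hdot ρB ((μ k).1) k (hvB k)] at h0
  have key : ∀ (M : Matrix (Fin n) (Fin n) ℂ) (α : Fin n → ℂ),
      (∀ k x, M.mulVec (v k) x = α k * v k x) →
      M = U * Matrix.diagonal α * Uᴴ := by
    intro M α hM
    have key2 : M * U = U * Matrix.diagonal α := by
      ext x k
      rw [Matrix.mul_apply, Matrix.mul_diagonal]
      simp only [hUdef, Matrix.of_apply]
      calc ∑ y, M x y * v k y = (M.mulVec (v k)) x := by rw [Matrix.mulVec]; rfl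
        _ = α k * v k x := hM k x
        _ = v k x * α k := by ring
    calc M = M * (U * Uᴴ) := by rw [hU', mul_one]
      _ = (M * U) * Uᴴ := by rw [mul_assoc]
      _ = U * Matrix.diagonal α * Uᴴ := by rw [key2]
  refine ⟨U, fun k => ((μ k).2).re, fun k => ((μ k).1).re, hUU,
    fun k => (Complex.nonneg_iff.mp (hαA k)).1, fun k => (Complex.nonneg_iff.mp (hαB k)).1,
    ?_, ?_⟩
  · have hcoe : ∀ k, ((((μ k).2).re : ℂ)) = (μ k).2 :=
      fun k => Complex.ext rfl ((Complex.nonneg_iff.mp (hαA k)).2)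
    refine key ρA _ (fun k x => ?_)
    rw [hcoe k]; exact hvA k x
  · have hcoe : ∀ k, ((((μ k).1).re : ℂ)) = (μ k).1 :=
      fun k => Complex.ext rfl ((Complex.nonneg_iff.mp (hαB k)).2)
    refine key ρB _ (fun k x => ?_)
    rw [hcoe k]; exact hvB k x

section ConjLemmas

variable {n : ℕ} {U : Matrix (Fin n) (Fin n) ℂ}

theorem conj_mul_conj (hU' : U * Uᴴ = 1) (c c' : Fin n → ℂ) :
    (U * Matrix.diagonal c * Uᴴ) * (U * Matrix.diagonal c' * Uᴴ)
      = U * Matrix.diagonal (fun k => c k * c' k) * Uᴴ := by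
  have h : Matrix.diagonal c * Matrix.diagonal c' = Matrix.diagonal (fun k => c k * c' k) := by
    rw [Matrix.diagonal_mul_diagonal]
  calc (U * Matrix.diagonal c * Uᴴ) * (U * Matrix.diagonal c' * Uᴴ)
      = U * Matrix.diagonal c * (Uᴴ * U) * Matrix.diagonal c' * Uᴴ := by
        simp only [Matrix.mul_assoc]
    _ = U * Matrix.diagonal c * Matrix.diagonal c' * Uᴴ := by
        rw [mul_eq_one_comm.mp hU', Matrix.mul_one]
    _ = U * Matrix.diagonal (fun k => c k * c' k) * Uᴴ := by
        rw [Matrix.mul_assoc U, h]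

theorem conj_posSemidef {c : Fin n → ℝ} (hc : ∀ k, 0 ≤ c k) :
    (U * Matrix.diagonal (fun k => (c k : ℂ)) * Uᴴ).PosSemidef := by
  have hd : (Matrix.diagonal (fun k => (c k : ℂ))).PosSemidef :=
    Matrix.posSemidef_diagonal_iff.mpr (fun k => Complex.zero_le_real.mpr (hc k))
  exact hd.mul_mul_conjTranspose_same U

open scoped MatrixOrder in
theorem conj_psdSqrt (hU' : U * Uᴴ = 1) {c : Fin n → ℝ} (hc : ∀ k, 0 ≤ c k) :
    psdSqrt (U * Matrix.diagonal (fun k => (c k : ℂ)) * Uᴴ)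
      = U * Matrix.diagonal (fun k => ((Real.sqrt (c k) : ℝ) : ℂ)) * Uᴴ := by
  have hpsd : (U * Matrix.diagonal (fun k => (c k : ℂ)) * Uᴴ).PosSemidef := conj_posSemidef hc
  have hpsd' : (U * Matrix.diagonal (fun k => ((Real.sqrt (c k) : ℝ) : ℂ)) * Uᴴ).PosSemidef :=
    conj_posSemidef (fun k => Real.sqrt_nonneg (c k))
  have hsq : (U * Matrix.diagonal (fun k => ((Real.sqrt (c k) : ℝ) : ℂ)) * Uᴴ) ^ 2
      = U * Matrix.diagonal (fun k => (c k : ℂ)) * Uᴴ := by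
    have h2 : (fun k => ((Real.sqrt (c k) : ℝ) : ℂ) * ((Real.sqrt (c k) : ℝ) : ℂ))
        = fun k => ((c k : ℝ) : ℂ) := by
      funext k
      rw [← Complex.ofReal_mul, Real.mul_self_sqrt (hc k)]
    rw [pow_two, conj_mul_conj hU', h2]
  rw [psdSqrt, dif_pos hpsd]
  have hcfc := hpsd.1.cfc_eq Real.sqrt
  rw [Matrix.IsHermitian.cfc, Unitary.conjStarAlgAut_apply] at hcfc
  refine Eq.trans hcfc.symm ?_
  rw [← cfcₙ_eq_cfc (hf0 := by simp), ← CFC.sqrt_eq_real_sqrt _ hpsd.nonneg]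
  exact CFC.sqrt_unique (by rw [← pow_two, hsq]) hpsd'.nonneg

theorem conj_trace_re (hUU : Uᴴ * U = 1) (c : Fin n → ℝ) :
    (U * Matrix.diagonal (fun k => (c k : ℂ)) * Uᴴ).trace.re = ∑ k, c k := by
  rw [Matrix.trace_mul_cycle, hUU, Matrix.one_mul, Matrix.trace_diagonal]
  rw [← Complex.ofReal_sum]
  exact Complex.ofReal_re _

end ConjLemmas

theorem pureState_posSemidef {d : Type*} [Fintype d] [DecidableEq d] (ψ : d → ℂ) :
    (pureState ψ).PosSemidef := by
  refine Matrix.PosSemidef.of_dotProduct_mulVec_nonneg ?_ ?_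
  · ext x y
    simp [pureState, Matrix.vecMulVec_apply, Matrix.conjTranspose_apply, mul_comm]
  · intro z
    have h : dotProduct (star z) ((pureState ψ).mulVec z)
        = star (star ψ ⬝ᵥ z) * (star ψ ⬝ᵥ z) := by
      simp only [pureState, dotProduct, Matrix.mulVec, Matrix.vecMulVec_apply,
        Pi.star_apply, star_sum, star_mul', star_star]
      rw [Finset.sum_mul]
      congr 1
      funext x
      rw [Finset.mul_sum, Finset.mul_sum]
      congr 1
      funext y
      ring
    rw [h]
    exact star_mul_self_nonneg _

theorem pureState_trace {d : Type*} [Fintype d] [DecidableEq d] (ψ : d → ℂ)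
    (h : ∑ x, star (ψ x) * ψ x = 1) : (pureState ψ).trace = 1 := by
  rw [Matrix.trace]
  simp only [pureState, Matrix.diag_apply, Matrix.vecMulVec_apply, Pi.star_apply]
  rw [← h]
  congr 1
  funext x
  ring

theorem psd_diag_re_nonneg {d : Type*} [Fintype d] [DecidableEq d]
    {M : Matrix d d ℂ} (hM : M.PosSemidef) (k : d) : 0 ≤ (M k k).re := by
  have := hM.re_dotProduct_nonneg (Pi.single k 1)
  simpa [dotProduct, Matrix.mulVec, Pi.single_apply, Finset.sum_ite_eq',
    Finset.mul_sum] using this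

/-- **Theorem 1(1).** For commuting density matrices, the compatibility
equals the fidelity. -/
theorem compat_eq_fidelity_of_commute {n : ℕ}
    (ρA ρB : Matrix (Fin n) (Fin n) ℂ)
    (hA : IsDensityMatrix ρA) (hB : IsDensityMatrix ρB)
    (hcomm : ρA * ρB = ρB * ρA) :
    compat ρA ρB = fidelity ρA ρB := by
  classical
  obtain ⟨U, a, b, hUU, ha, hb, hρA, hρB⟩ :=
    Matrix.PosSemidef.exists_unitary_diag hA.1 hB.1 hcomm
  have hU' : U * Uᴴ = 1 := mul_eq_one_comm.mp hUU
  set F : ℝ := ∑ k, Real.sqrt (a k * b k) with hFdef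
  -- Step 1 : the fidelity equals `F`.
  have hfid : fidelity ρA ρB = F := by
    have h1 : psdSqrt ρA = U * Matrix.diagonal (fun k => ((Real.sqrt (a k) : ℝ) : ℂ)) * Uᴴ := by
      rw [hρA]; exact conj_psdSqrt hU' ha
    have h2 : psdSqrt ρA * ρB * psdSqrt ρA
        = U * Matrix.diagonal (fun k => ((a k * b k : ℝ) : ℂ)) * Uᴴ := by
      rw [h1, hρB, conj_mul_conj hU', conj_mul_conj hU']
      have h3 : (fun k => ((Real.sqrt (a k) : ℝ) : ℂ) * ((b k : ℝ) : ℂ)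
            * ((Real.sqrt (a k) : ℝ) : ℂ)) = fun k => ((a k * b k : ℝ) : ℂ) := by
        funext k
        rw [← Complex.ofReal_mul, ← Complex.ofReal_mul]
        congr 1
        have h4 := Real.mul_self_sqrt (ha k)
        linear_combination (b k) * h4
      rw [h3]
    have h5 : psdSqrt (psdSqrt ρA * ρB * psdSqrt ρA)
        = U * Matrix.diagonal (fun k => ((Real.sqrt (a k * b k) : ℝ) : ℂ)) * Uᴴ := by
      rw [h2]
      exact conj_psdSqrt hU' (fun k => mul_nonneg (ha k) (hb k))
    rw [fidelity, h5, conj_trace_re hUU]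
  -- column sums of `U`
  have hcol : ∀ k, ∑ x, star (U x k) * U x k = 1 := by
    intro k
    have h := congrFun (congrFun hUU k) k
    rw [Matrix.mul_apply] at h
    simp only [Matrix.conjTranspose_apply] at h
    rw [h, Matrix.one_apply_eq]
  -- sums of eigenvalues
  have hsuma : ∑ k, a k = 1 := by
    have h2 := conj_trace_re hUU a
    rw [← hρA] at h2
    rw [hA.2] at h2
    simpa using h2.symm
  have hsumb : ∑ k, b k = 1 := by
    have h2 := conj_trace_re hUU b
    rw [← hρB] at h2
    rw [hB.2] at h2
    simpa using h2.symm
  -- Step 2 : `F` is achieved by the pure-state decomposition along the common eigenbasis.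
  have hmem : F ∈ { c : ℝ | ∃ (m : ℕ) (σ : Fin m → Matrix (Fin n) (Fin n) ℂ)
      (p q : Fin m → ℝ),
      (∀ i, IsDensityMatrix (σ i)) ∧ (∀ i, 0 ≤ p i) ∧ (∀ i, 0 ≤ q i) ∧
      ∑ i, p i = 1 ∧ ∑ i, q i = 1 ∧
      ∑ i, p i • σ i = ρA ∧ ∑ i, q i • σ i = ρB ∧
      c = ∑ i, Real.sqrt (p i * q i) } := by
    refine ⟨n, fun k => pureState (fun x => U x k), a, b, ?_, ha, hb, hsuma, hsumb, ?_, ?_, rfl⟩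
    · intro k
      exact ⟨pureState_posSemidef _, pureState_trace _ (hcol k)⟩
    · ext x y
      rw [hρA, Matrix.mul_apply]
      rw [Matrix.sum_apply]
      apply Finset.sum_congr rfl
      intro k _
      simp only [Matrix.smul_apply, pureState, Matrix.vecMulVec_apply, Pi.star_apply,
        Matrix.mul_diagonal, Matrix.conjTranspose_apply, Complex.real_smul]
      ring
    · ext x y
      rw [hρB, Matrix.mul_apply]
      rw [Matrix.sum_apply]
      apply Finset.sum_congr rfl
      intro k _
      simp only [Matrix.smul_apply, pureState, Matrix.vecMulVec_apply, Pi.star_apply,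
        Matrix.mul_diagonal, Matrix.conjTranspose_apply, Complex.real_smul]
      ring
  -- Step 3 : every admissible overlap is at most `F`.
  have hupper : ∀ c ∈ { c : ℝ | ∃ (m : ℕ) (σ : Fin m → Matrix (Fin n) (Fin n) ℂ)
      (p q : Fin m → ℝ),
      (∀ i, IsDensityMatrix (σ i)) ∧ (∀ i, 0 ≤ p i) ∧ (∀ i, 0 ≤ q i) ∧
      ∑ i, p i = 1 ∧ ∑ i, q i = 1 ∧
      ∑ i, p i • σ i = ρA ∧ ∑ i, q i • σ i = ρB ∧
      c = ∑ i, Real.sqrt (p i * q i) }, c ≤ F := by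
    rintro c ⟨m, σ, p, q, hden, hp, hq, hps, hqs, hρAs, hρBs, hc⟩
    set M : Fin n → Fin m → ℝ := fun k i => ((Uᴴ * σ i * U) k k).re with hMdef
    have hPSD : ∀ i, (Uᴴ * σ i * U).PosSemidef := by
      intro i
      have h := (hden i).1.mul_mul_conjTranspose_same Uᴴ
      rwa [Matrix.conjTranspose_conjTranspose] at h
    have hM0 : ∀ k i, 0 ≤ M k i := fun k i => psd_diag_re_nonneg (hPSD i) k
    have hMsum : ∀ i, ∑ k, M k i = 1 := by
      intro i
      have htr : (Uᴴ * σ i * U).trace = 1 := by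
        rw [Matrix.trace_mul_cycle, hU', Matrix.one_mul]
        exact (hden i).2
      have h2 : ∑ k, M k i = (Uᴴ * σ i * U).trace.re := by
        rw [Matrix.trace, Complex.re_sum]
        rfl
      rw [h2, htr]
      rfl
    -- the weighted averages of `M` are the eigenvalue vectors
    have hDA : Uᴴ * ρA * U = Matrix.diagonal (fun k => (a k : ℂ)) := by
      rw [hρA]
      calc Uᴴ * (U * Matrix.diagonal (fun k => (a k : ℂ)) * Uᴴ) * U
          = (Uᴴ * U) * Matrix.diagonal (fun k => (a k : ℂ)) * (Uᴴ * U) := by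
            simp only [Matrix.mul_assoc]
        _ = Matrix.diagonal (fun k => (a k : ℂ)) := by
            rw [hUU, Matrix.one_mul, Matrix.mul_one]
    have hDB : Uᴴ * ρB * U = Matrix.diagonal (fun k => (b k : ℂ)) := by
      rw [hρB]
      calc Uᴴ * (U * Matrix.diagonal (fun k => (b k : ℂ)) * Uᴴ) * U
          = (Uᴴ * U) * Matrix.diagonal (fun k => (b k : ℂ)) * (Uᴴ * U) := by
            simp only [Matrix.mul_assoc]
        _ = Matrix.diagonal (fun k => (b k : ℂ)) := by
            rw [hUU, Matrix.one_mul, Matrix.mul_one]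
    have hMp : ∀ k, ∑ i, M k i * p i = a k := by
      intro k
      have hsum : Uᴴ * ρA * U = ∑ i, p i • (Uᴴ * σ i * U) := by
        rw [← hρAs, Matrix.mul_sum, Matrix.sum_mul]
        apply Finset.sum_congr rfl
        intro i _
        rw [Matrix.mul_smul, Matrix.smul_mul]
      have h2 : ((Uᴴ * ρA * U) k k).re = a k := by
        rw [hDA, Matrix.diagonal_apply_eq, Complex.ofReal_re]
      rw [hsum] at h2
      rw [Matrix.sum_apply] at h2
      rw [Complex.re_sum] at h2
      rw [← h2]
      apply Finset.sum_congr rfl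
      intro i _
      rw [Matrix.smul_apply, Complex.smul_re]
      simp [hMdef, mul_comm]
    have hMq : ∀ k, ∑ i, M k i * q i = b k := by
      intro k
      have hsum : Uᴴ * ρB * U = ∑ i, q i • (Uᴴ * σ i * U) := by
        rw [← hρBs, Matrix.mul_sum, Matrix.sum_mul]
        apply Finset.sum_congr rfl
        intro i _
        rw [Matrix.mul_smul, Matrix.smul_mul]
      have h2 : ((Uᴴ * ρB * U) k k).re = b k := by
        rw [hDB, Matrix.diagonal_apply_eq, Complex.ofReal_re]
      rw [hsum] at h2
      rw [Matrix.sum_apply] at h2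
      rw [Complex.re_sum] at h2
      rw [← h2]
      apply Finset.sum_congr rfl
      intro i _
      rw [Matrix.smul_apply, Complex.smul_re]
      simp [hMdef, mul_comm]
    -- Cauchy–Schwarz in each row of `M`
    have hCS : ∀ k, ∑ i, M k i * Real.sqrt (p i * q i) ≤ Real.sqrt (a k * b k) := by
      intro k
      have key := Finset.sum_sq_le_sum_mul_sum_of_sq_eq_mul Finset.univ
        (r := fun i => M k i * Real.sqrt (p i * q i))
        (f := fun i => M k i * p i) (g := fun i => M k i * q i)
        (fun i _ => mul_nonneg (hM0 k i) (hp i)) (fun i _ => mul_nonneg (hM0 k i) (hq i))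
        (fun i _ => by
          rw [mul_pow, Real.sq_sqrt (mul_nonneg (hp i) (hq i))]
          ring)
      rw [hMp k, hMq k] at key
      have hnonneg : 0 ≤ ∑ i, M k i * Real.sqrt (p i * q i) :=
        Finset.sum_nonneg (fun i _ => mul_nonneg (hM0 k i) (Real.sqrt_nonneg _))
      exact (Real.le_sqrt hnonneg (mul_nonneg (ha k) (hb k))).mpr key
    calc c = ∑ i, Real.sqrt (p i * q i) := hc
      _ = ∑ i, (∑ k, M k i) * Real.sqrt (p i * q i) := by
          apply Finset.sum_congr rfl
          intro i _
          rw [hMsum i, one_mul]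
      _ = ∑ i, ∑ k, M k i * Real.sqrt (p i * q i) := by
          apply Finset.sum_congr rfl
          intro i _
          rw [Finset.sum_mul]
      _ = ∑ k, ∑ i, M k i * Real.sqrt (p i * q i) := Finset.sum_comm
      _ ≤ ∑ k, Real.sqrt (a k * b k) := Finset.sum_le_sum (fun k _ => hCS k)
      _ = F := rfl
  -- Step 4 : conclude.
  have hF0 : 0 ≤ F := Finset.sum_nonneg (fun k _ => Real.sqrt_nonneg _)
  rw [hfid, compat]
  apply le_antisymm
  · exact Real.sSup_le hupper hF0
  · exact le_csSup ⟨F, hupper⟩ hmem
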